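/- For plane trees with edge increments +-1, setting T = T(t) = (1 - 4t - sqrt(1-8t))/(4t) (the generating function of such labelled trees with at least one edge), the specialization F_2(t, e^{iu}, e^{-iu}) = (1+T)(1 + T^2 cos^2 u) / ((1-T)(1 - T cos u)^2). -/

import Mathlib

open Complex

/-- Plane trees whose edges carry labels `±1` (`true` for `+1`, `false` for `-1`). -/
inductive PTree1 where
  | node : List (Bool × PTree1) → PTree1

mutual
/-- Number of edges. -/
def PTree1.edges : PTree1 → ℕ
  | .node cs => PTree1.edgesList cs
def PTree1.edgesList : List (Bool × PTree1) → ℕ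
  | [] => 0
  | (_, t) :: rest => t.edges + 1 + PTree1.edgesList rest
end

mutual
/-- `∑_{v ∈ T} x^{ℓ(v)}` for the induced labelling (root labelled `0`). -/
noncomputable def PTree1.labelSum : PTree1 → ℂ → ℂ
  | .node cs, x => 1 + PTree1.labelSumList cs x
noncomputable def PTree1.labelSumList : List (Bool × PTree1) → ℂ → ℂ
  | [], _ => 0
  | (b, t) :: rest, x =>
      (if b then x else x⁻¹) * t.labelSum x + PTree1.labelSumList rest x
end

/-- `T(t) = (1 - 4t - √(1-8t))/(4t)`, the generating function (by edges) of labelled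
plane trees with increments `±1` and at least one edge; it satisfies `T = 2t(1+T)²`. -/
noncomputable def Tfun1 (t : ℝ) : ℝ := (1 - 4*t - Real.sqrt (1 - 8*t)) / (4*t)

namespace PT1Aux
open PTree1

mutual
def encT : PTree1 → List Bool
  | .node cs => encL cs
def encL : List (Bool × PTree1) → List Bool
  | [] => []
  | (b, t) :: r => true :: b :: (encT t ++ false :: encL r)
end

mutual
theorem len_encT : ∀ T : PTree1, (encT T).length = 3 * T.edges
  | .node cs => by rw [encT, PTree1.edges]; exact len_encL cs
theorem len_encL : ∀ cs : List (Bool × PTree1), (encL cs).length = 3 * edgesList cs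
  | [] => rfl
  | (b, t) :: r => by
      simp only [encL, List.length_cons, List.length_append, len_encT t, len_encL r,
        edgesList]
      ring
end

theorem encL_inj : ∀ (cs1 cs2 : List (Bool × PTree1)) (l1 l2 : List Bool),
    encL cs1 ++ false :: l1 = encL cs2 ++ false :: l2 → cs1 = cs2 ∧ l1 = l2
  | [], [], l1, l2, h => ⟨rfl, by simpa [encL] using h⟩
  | [], (b2, t2) :: r2, l1, l2, h => by simp [encL] at h
  | (b1, t1) :: r1, [], l1, l2, h => by simp [encL] at h
  | (b1, .node d1) :: r1, (b2, .node d2) :: r2, l1, l2, h => by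
      simp only [encL, encT, List.cons_append, List.append_assoc, List.cons.injEq] at h
      obtain ⟨-, hb, h⟩ := h
      obtain ⟨hd, h⟩ := encL_inj d1 d2 _ _ h
      obtain ⟨hr, hl⟩ := encL_inj r1 r2 _ _ h
      subst hb; subst hd; subst hr; exact ⟨rfl, hl⟩
  termination_by cs1 => sizeOf cs1
  decreasing_by all_goals (simp; try omega)

theorem encL_injective : Function.Injective encL := by
  intro cs1 cs2 h
  exact (encL_inj cs1 cs2 [] [] (by rw [h])).1

def ι : List (Bool × PTree1) → Σ n : ℕ, List.Vector Bool (3*n) :=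
  fun cs => ⟨edgesList cs, ⟨encL cs, len_encL cs⟩⟩

theorem ι_injective : Function.Injective ι := by
  intro cs1 cs2 h
  exact encL_injective (congrArg (fun p : (Σ n : ℕ, List.Vector Bool (3*n)) => p.2.1) h)

theorem summable_geom_sq {r : ℝ} (hr : |r| < 1) :
    Summable (fun n : ℕ => ((n : ℝ) + 1)^2 * r^n) := by
  have hr' : ‖r‖ < 1 := by rwa [Real.norm_eq_abs]
  have A := summable_pow_mul_geometric_of_norm_lt_one (R := ℝ) 2 hr'
  have B := summable_pow_mul_geometric_of_norm_lt_one (R := ℝ) 1 hr'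
  have C := summable_pow_mul_geometric_of_norm_lt_one (R := ℝ) 0 hr'
  exact (A.add ((B.mul_left 2).add C)).congr (fun n => by push_cast; ring)

theorem summable_g {t : ℝ} (h0 : 0 ≤ t) (h8 : 8*t < 1) :
    Summable (fun p : Σ n : ℕ, List.Vector Bool (3*n) => t^p.1 * ((p.1 : ℝ)+1)^2) := by
  have hnn : ∀ p : Σ n : ℕ, List.Vector Bool (3*n), 0 ≤ t^p.1 * ((p.1 : ℝ)+1)^2 :=
    fun p => mul_nonneg (pow_nonneg h0 _) (by positivity)
  refine (summable_sigma_of_nonneg hnn).2 ⟨fun n => Summable.of_finite, ?_⟩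
  have key : ∀ n : ℕ, (∑' _ : List.Vector Bool (3*n), t^n * ((n : ℝ)+1)^2)
      = ((n : ℝ)+1)^2 * (8*t)^n := by
    intro n
    rw [tsum_fintype, Finset.sum_const, Finset.card_univ, card_vector, Fintype.card_bool,
      nsmul_eq_mul]
    push_cast
    rw [mul_pow, pow_mul]
    ring
  rw [show (fun n : ℕ => ∑' y : List.Vector Bool (3*n), t^n * ((n:ℝ)+1)^2)
      = fun n : ℕ => ((n : ℝ)+1)^2 * (8*t)^n from funext key]
  exact summable_geom_sq (abs_lt.2 ⟨by linarith, by linarith⟩)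

variable {E : Type*} [NormedAddCommGroup E] [CompleteSpace E]

theorem summable_of_boundL {t : ℝ} (h0 : 0 ≤ t) (h8 : 8*t < 1) (f : List (Bool × PTree1) → E)
    (hf : ∀ cs, ‖f cs‖ ≤ t ^ edgesList cs * ((edgesList cs : ℝ) + 1)^2) : Summable f := by
  have hg := (summable_g h0 h8).comp_injective ι_injective
  exact Summable.of_norm_bounded hg (fun cs => hf cs)

def eqvT : List (Bool × PTree1) ≃ PTree1 where
  toFun := .node
  invFun := fun T => match T with | .node cs => cs
  left_inv := fun cs => rfl
  right_inv := fun T => by cases T; rfl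

theorem edges_node (cs : List (Bool × PTree1)) : (PTree1.node cs).edges = edgesList cs := by
  rw [PTree1.edges]

theorem eqvT_apply (cs : List (Bool × PTree1)) : eqvT cs = .node cs := rfl

theorem summable_of_boundT {t : ℝ} (h0 : 0 ≤ t) (h8 : 8*t < 1) (f : PTree1 → E)
    (hf : ∀ T, ‖f T‖ ≤ t ^ T.edges * ((T.edges : ℝ) + 1)^2) : Summable f := by
  refine eqvT.summable_iff.1 (summable_of_boundL h0 h8 _ (fun cs => ?_))
  simpa [eqvT, edges_node] using hf (.node cs)

mutual
theorem norm_labelSum (x : ℂ) (hx : ‖x‖ = 1) :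
    ∀ T : PTree1, ‖T.labelSum x‖ ≤ (T.edges : ℝ) + 1
  | .node cs => by
      rw [PTree1.labelSum, edges_node]
      calc ‖1 + labelSumList cs x‖ ≤ ‖(1:ℂ)‖ + ‖labelSumList cs x‖ := norm_add_le _ _
        _ ≤ 1 + (edgesList cs : ℝ) := by
            have := norm_labelSumList x hx cs
            simp only [norm_one]
            linarith
        _ = (edgesList cs : ℝ) + 1 := by ring
theorem norm_labelSumList (x : ℂ) (hx : ‖x‖ = 1) :
    ∀ cs : List (Bool × PTree1), ‖labelSumList cs x‖ ≤ (edgesList cs : ℝ)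
  | [] => by simp [PTree1.labelSumList]
  | (b, s) :: r => by
      rw [PTree1.labelSumList, edgesList]
      have hw : ‖if b then x else x⁻¹‖ = 1 := by cases b <;> simp [hx, norm_inv]
      calc ‖(if b then x else x⁻¹) * s.labelSum x + labelSumList r x‖
          ≤ ‖(if b then x else x⁻¹) * s.labelSum x‖ + ‖labelSumList r x‖ := norm_add_le _ _
        _ = ‖s.labelSum x‖ + ‖labelSumList r x‖ := by rw [norm_mul, hw, one_mul]
        _ ≤ ((s.edges : ℝ) + 1) + (edgesList r : ℝ) := by
            have h1 := norm_labelSum x hx s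
            have h2 := norm_labelSumList x hx r
            linarith
        _ ≤ ((s.edges + 1 + edgesList r : ℕ) : ℝ) := by push_cast; linarith
end
section TsumLemmas
variable {𝕜 : Type*} [RCLike 𝕜]

theorem tsum_list_cons {β : Type*} (F : List β → 𝕜) (hF : Summable F) :
    ∑' l, F l = F [] + ∑' p : β × List β, F (p.1 :: p.2) := by
  classical
  rw [hF.tsum_eq_add_tsum_ite []]
  congr 1
  have hinj : Function.Injective (fun p : β × List β => p.1 :: p.2) := by
    intro p q h
    simp only [List.cons.injEq] at h
    exact Prod.ext h.1 h.2
  have hsupp : Function.support (fun l : List β => if l = [] then 0 else F l)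
      ⊆ Set.range (fun p : β × List β => p.1 :: p.2) := by
    intro l hl
    match l with
    | [] => simp at hl
    | a :: r => exact ⟨(a, r), rfl⟩
  have := hinj.tsum_eq (f := fun l : List β => if l = [] then 0 else F l) hsupp
  rw [← this]
  exact tsum_congr (fun p => by simp)

theorem tsum_pair {β γ : Type*} (ψ : β → 𝕜) (χ : γ → 𝕜) (hψ : Summable ψ) (hχ : Summable χ) :
    Summable (fun p : β × γ => ψ p.1 * χ p.2) ∧
      ∑' p : β × γ, ψ p.1 * χ p.2 = (∑' b, ψ b) * (∑' c, χ c) := by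
  have hψn : Summable fun b => ‖ψ b‖ := summable_norm_iff.2 hψ
  have hχn : Summable fun c => ‖χ c‖ := summable_norm_iff.2 hχ
  exact ⟨summable_mul_of_summable_norm hψn hχn,
    (tsum_mul_tsum_of_summable_norm hψn hχn).symm⟩

theorem tsum_triple {β γ : Type*} (φ : Bool → 𝕜) (ψ : β → 𝕜) (χ : List γ → 𝕜)
    (hψ : Summable ψ) (hχ : Summable χ) :
    Summable (fun p : (Bool × β) × List γ => φ p.1.1 * ψ p.1.2 * χ p.2) ∧
      ∑' p : (Bool × β) × List γ, φ p.1.1 * ψ p.1.2 * χ p.2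
        = (φ true + φ false) * (∑' b, ψ b) * (∑' l, χ l) := by
  have h1 := tsum_pair φ ψ (Summable.of_finite) hψ
  have h2 := tsum_pair (fun q : Bool × β => φ q.1 * ψ q.2) χ h1.1 hχ
  have hb : (∑' b : Bool, φ b) = φ true + φ false := by
    rw [tsum_fintype]
    exact Fintype.sum_bool φ
  refine ⟨h2.1, ?_⟩
  rw [show (fun p : (Bool × β) × List γ => φ p.1.1 * ψ p.1.2 * χ p.2)
      = fun p : (Bool × β) × List γ => (fun q : Bool × β => φ q.1 * ψ q.2) p.1 * χ p.2
      from rfl]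
  rw [h2.2, h1.2, hb]

end TsumLemmas

mutual
def depth : PTree1 → ℕ
  | .node cs => depthL cs
def depthL : List (Bool × PTree1) → ℕ
  | [] => 0
  | (_, s) :: r => max (depth s + 1) (depthL r)
end

theorem depth_node (cs : List (Bool × PTree1)) : depth (.node cs) = depthL cs := by rw [depth]

theorem depth_eq_zero : ∀ T : PTree1, depth T ≤ 0 → T = .node []
  | .node [], _ => rfl
  | .node ((b, s) :: r), h => by
      rw [depth_node, depthL] at h
      omega

section RealPart

variable {t : ℝ} (ht0 : 0 < t) (ht8 : t < 1/8)

/-- weight of a tree -/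
noncomputable def f1R (t : ℝ) (T : PTree1) : ℝ := t ^ T.edges

noncomputable def J (t : ℝ) (k : ℕ) (T : PTree1) : ℝ := if depth T ≤ k then t ^ T.edges else 0

noncomputable def JL (t : ℝ) (k : ℕ) (cs : List (Bool × PTree1)) : ℝ :=
  if depthL cs ≤ k then t ^ edgesList cs else 0

include ht0 ht8

theorem pow_bd (n : ℕ) : ‖t ^ n‖ ≤ t ^ n * ((n : ℝ) + 1)^2 := by
  rw [Real.norm_eq_abs, _root_.abs_of_nonneg (pow_nonneg ht0.le n)]
  have h1 : (1:ℝ) ≤ ((n:ℝ)+1)^2 := by nlinarith [Nat.cast_nonneg (α := ℝ) n]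
  nlinarith [pow_nonneg ht0.le n]

theorem summable_f1R : Summable (f1R t) :=
  summable_of_boundT ht0.le (by linarith) _ (fun T => pow_bd ht0 ht8 T.edges)

theorem summable_J (k : ℕ) : Summable (J t k) := by
  refine summable_of_boundT ht0.le (by linarith) _ (fun T => ?_)
  rw [J]
  split
  · exact pow_bd ht0 ht8 T.edges
  · simp only [norm_zero]
    positivity

theorem summable_JL (k : ℕ) : Summable (JL t k) := by
  refine summable_of_boundL ht0.le (by linarith) _ (fun cs => ?_)
  rw [JL]
  split
  · exact pow_bd ht0 ht8 (edgesList cs)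
  · simp only [norm_zero]
    positivity

theorem summable_f1RL : Summable (fun cs => t ^ edgesList cs) := by
  refine summable_of_boundL ht0.le (by linarith) _ (fun cs => pow_bd ht0 ht8 _)

/-- The basic quadratic equation for the plain generating function. -/
theorem S1R_quad : (∑' T : PTree1, t ^ T.edges) = 1 + 2*t*(∑' T : PTree1, t ^ T.edges)^2 := by
  have hLT : (∑' cs : List (Bool × PTree1), t ^ edgesList cs) = ∑' T : PTree1, t ^ T.edges := by
    rw [← eqvT.tsum_eq (f := fun T : PTree1 => t ^ T.edges)]
    exact tsum_congr (fun cs => by rw [eqvT_apply, edges_node])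
  have hdec := tsum_list_cons (𝕜 := ℝ) _ (summable_f1RL ht0 ht8)
  have htri := tsum_triple (𝕜 := ℝ) (β := PTree1) (γ := Bool × PTree1) (fun _ => t)
    (fun T => t ^ T.edges) (fun cs => t ^ edgesList cs) (summable_f1R ht0 ht8)
    (summable_f1RL ht0 ht8)
  have hpt : (fun p : (Bool × PTree1) × List (Bool × PTree1) => t ^ edgesList (p.1 :: p.2))
      = fun p => t * t ^ p.1.2.edges * t ^ edgesList p.2 := by
    funext ⟨⟨b, s⟩, r⟩
    rw [edgesList, pow_add, pow_add, pow_one]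
    ring
  rw [hpt] at hdec
  rw [htri.2] at hdec
  rw [hLT] at hdec
  have h0 : t ^ edgesList ([] : List (Bool × PTree1)) = 1 := by
    rw [show edgesList ([] : List (Bool × PTree1)) = 0 from rfl, pow_zero]
  rw [h0] at hdec
  linear_combination hdec

theorem D0_eq : (∑' T : PTree1, J t 0 T) = 1 := by
  rw [tsum_eq_single (PTree1.node []) ?_]
  · rw [J]
    simp [depth_node, depthL, edges_node, edgesList]
  · intro T hT
    rw [J]
    split
    · exact absurd (depth_eq_zero T (by omega)) hT
    · rfl

theorem Dk_succ (k : ℕ) : (∑' T : PTree1, J t (k+1) T)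
    = 1 + 2*t*(∑' T : PTree1, J t k T)*(∑' T : PTree1, J t (k+1) T) := by
  have hLT : (∑' cs : List (Bool × PTree1), JL t (k+1) cs) = ∑' T : PTree1, J t (k+1) T := by
    rw [← eqvT.tsum_eq (f := J t (k+1))]
    refine tsum_congr (fun cs => ?_)
    rw [J, JL, eqvT_apply, edges_node, depth_node]
  have hdec := tsum_list_cons (𝕜 := ℝ) _ (summable_JL ht0 ht8 (k+1))
  have htri := tsum_triple (𝕜 := ℝ) (β := PTree1) (γ := Bool × PTree1) (fun _ => t)
    (J t k) (JL t (k+1)) (summable_J ht0 ht8 k) (summable_JL ht0 ht8 (k+1))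
  have hpt : (fun p : (Bool × PTree1) × List (Bool × PTree1) => JL t (k+1) (p.1 :: p.2))
      = fun p => t * J t k p.1.2 * JL t (k+1) p.2 := by
    funext ⟨⟨b, s⟩, r⟩
    simp only [JL, J, edgesList]
    rw [depthL]
    by_cases h1 : depth s ≤ k <;> by_cases h2 : depthL r ≤ k + 1
    · rw [if_pos (by omega), if_pos h1, if_pos h2, pow_add, pow_add, pow_one]; ring
    · rw [if_neg (by omega), if_pos h1, if_neg h2]; ring
    · rw [if_neg (by omega), if_neg h1]; ring
    · rw [if_neg (by omega), if_neg h1]; ring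
  rw [hpt] at hdec
  rw [htri.2] at hdec
  rw [hLT] at hdec
  have h0 : JL t (k+1) [] = 1 := by
    rw [JL, if_pos (by rw [depthL]; omega)]
    rw [show edgesList ([] : List (Bool × PTree1)) = 0 from rfl, pow_zero]
  rw [h0] at hdec
  linear_combination hdec

theorem gv_eq : 1 + Tfun1 t = (1 - Real.sqrt (1 - 8*t))/(4*t) := by
  rw [Tfun1]
  field_simp
  ring

theorem sqrt_facts : 0 < Real.sqrt (1 - 8*t) ∧ Real.sqrt (1 - 8*t) < 1 ∧
    Real.sqrt (1 - 8*t) ^ 2 = 1 - 8*t := by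
  have h1 : (0:ℝ) < 1 - 8*t := by linarith
  have h2 := Real.sq_sqrt h1.le
  have h3 := Real.sqrt_pos.2 h1
  refine ⟨h3, ?_, h2⟩
  nlinarith [h2, h3]

theorem gv_quad : 1 + Tfun1 t = 1 + 2*t*(1 + Tfun1 t)^2 := by
  obtain ⟨h3, h4, h2⟩ := sqrt_facts ht0 ht8
  rw [gv_eq ht0 ht8]
  field_simp
  nlinarith [h2]

theorem gv_gt : 1 < 1 + Tfun1 t := by
  obtain ⟨h3, h4, h2⟩ := sqrt_facts ht0 ht8
  rw [gv_eq ht0 ht8]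
  rw [lt_div_iff₀ (by linarith)]
  nlinarith

theorem gv_lt : 1 + Tfun1 t < 2 := by
  obtain ⟨h3, h4, h2⟩ := sqrt_facts ht0 ht8
  rw [gv_eq ht0 ht8]
  rw [div_lt_iff₀ (by linarith)]
  nlinarith

theorem Dk_le (k : ℕ) : (∑' T : PTree1, J t k T) ≤ 1 + Tfun1 t := by
  induction k with
  | zero => rw [D0_eq ht0 ht8]; linarith [gv_gt ht0 ht8]
  | succ k ih =>
      set g := 1 + Tfun1 t with hg
      have hDk0 : 0 ≤ ∑' T : PTree1, J t k T := by
        refine tsum_nonneg (fun T => ?_)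
        rw [J]; split
        · exact pow_nonneg ht0.le _
        · exact le_refl 0
      have hgpos : 0 < g := by linarith [gv_gt ht0 ht8]
      have hg2 : 2*t*g < 1 := by nlinarith [gv_lt ht0 ht8]
      have hrec := Dk_succ ht0 ht8 k
      set D := ∑' T : PTree1, J t k T
      set D' := ∑' T : PTree1, J t (k+1) T
      have h1 : D' * (1 - 2*t*D) = 1 := by linarith [hrec]
      have hpos : 0 < 1 - 2*t*D := by
        rcases lt_trichotomy (1 - 2*t*D) 0 with h | h | h
        · nlinarith [h1]
        · rw [h] at h1; norm_num at h1
        · exact h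
      have hgin : g * (1 - 2*t*g) = 1 := by linear_combination gv_quad ht0 ht8
      have hD2 : 1 - 2*t*g ≤ 1 - 2*t*D := by nlinarith
      -- D' = 1/(1-2tD) ≤ 1/(1-2tg) = g
      have : D' = 1/(1 - 2*t*D) := by field_simp at h1 ⊢; linarith [h1]
      rw [this]
      rw [div_le_iff₀ hpos]
      nlinarith [hgin, hD2]

theorem S1R_le : (∑' T : PTree1, t ^ T.edges) ≤ 1 + Tfun1 t := by
  refine Summable.tsum_le_of_sum_le (summable_f1R ht0 ht8) (fun F => ?_)
  set k := F.sup depth with hk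
  calc (∑ T ∈ F, f1R t T) = ∑ T ∈ F, J t k T := by
        refine Finset.sum_congr rfl (fun T hT => ?_)
        rw [f1R, J, if_pos (Finset.le_sup (f := depth) hT)]
    _ ≤ ∑' T : PTree1, J t k T := by
        refine Summable.sum_le_tsum F (fun T _ => ?_) (summable_J ht0 ht8 k)
        rw [J]; split
        · exact pow_nonneg ht0.le _
        · exact le_refl 0
    _ ≤ 1 + Tfun1 t := Dk_le ht0 ht8 k

theorem S1R_eq : (∑' T : PTree1, t ^ T.edges) = 1 + Tfun1 t := by
  set S := ∑' T : PTree1, t ^ T.edges with hS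
  set g := 1 + Tfun1 t with hg
  have h1 : S = 1 + 2*t*S^2 := S1R_quad ht0 ht8
  have h2 : g = 1 + 2*t*g^2 := gv_quad ht0 ht8
  have h3 : S ≤ g := S1R_le ht0 ht8
  have hglt : g < 1/(4*t) := by
    rw [hg, gv_eq ht0 ht8]
    obtain ⟨hs0, -, -⟩ := sqrt_facts ht0 ht8
    rw [div_lt_div_iff₀ (by linarith) (by linarith)]
    nlinarith
  have hfac : (S - g) * (1 - 2*t*(S + g)) = 0 := by linear_combination h1 - h2
  rcases mul_eq_zero.1 hfac with h | h
  · linarith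
  · exfalso
    have hgpos : 0 < g := by linarith [gv_gt ht0 ht8]
    have h4 : g * (4*t) < 1 := (lt_div_iff₀ (by linarith)).1 hglt
    have h5 : 2*t*S ≤ 2*t*g := by nlinarith
    linarith
end RealPart

section CxPart

variable {t : ℝ} (ht0 : 0 < t) (ht8 : t < 1/8)

include ht0 ht8

theorem normtC : ‖(t:ℂ)‖ = t := by
  rw [Complex.norm_real, Real.norm_eq_abs, _root_.abs_of_nonneg ht0.le]

theorem powC_bd (n : ℕ) : ‖(t:ℂ) ^ n‖ = t ^ n := by
  rw [norm_pow, normtC ht0 ht8]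

theorem sumC1 : Summable (fun T : PTree1 => (t:ℂ)^T.edges) := by
  refine summable_of_boundT ht0.le (by linarith) _ (fun T => ?_)
  rw [powC_bd ht0 ht8]
  have := pow_bd ht0 ht8 T.edges
  rwa [Real.norm_eq_abs, _root_.abs_of_nonneg (pow_nonneg ht0.le _)] at this

theorem sumC1L : Summable (fun cs : List (Bool × PTree1) => (t:ℂ)^edgesList cs) := by
  refine summable_of_boundL ht0.le (by linarith) _ (fun cs => ?_)
  rw [powC_bd ht0 ht8]
  have := pow_bd ht0 ht8 (edgesList cs)
  rwa [Real.norm_eq_abs, _root_.abs_of_nonneg (pow_nonneg ht0.le _)] at this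

theorem mul_bd_aux (n : ℕ) (w : ℂ) (hw : ‖w‖ ≤ (n:ℝ) + 1) :
    ‖(t:ℂ)^n * w‖ ≤ t^n * ((n:ℝ)+1)^2 := by
  rw [norm_mul, powC_bd ht0 ht8]
  have h1 : (0:ℝ) ≤ t^n := pow_nonneg ht0.le _
  have h2 : (0:ℝ) ≤ (n:ℝ) + 1 := by positivity
  have h3 : t^n*‖w‖ ≤ t^n*((n:ℝ)+1) := mul_le_mul_of_nonneg_left hw h1
  have h5 : (1:ℝ) ≤ (n:ℝ)+1 := by linarith [Nat.cast_nonneg (α := ℝ) n]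
  have h4 : t^n*((n:ℝ)+1) ≤ t^n*((n:ℝ)+1)^2 :=
    mul_le_mul_of_nonneg_left (by nlinarith) h1
  linarith

theorem mul_bd_aux2 (n : ℕ) (w v : ℂ) (hw : ‖w‖ ≤ (n:ℝ) + 1) (hv : ‖v‖ ≤ (n:ℝ) + 1) :
    ‖(t:ℂ)^n * w * v‖ ≤ t^n * ((n:ℝ)+1)^2 := by
  rw [norm_mul, norm_mul, powC_bd ht0 ht8]
  have h1 : (0:ℝ) ≤ t^n := pow_nonneg ht0.le _
  have h3 : ‖w‖*‖v‖ ≤ ((n:ℝ)+1)^2 := by nlinarith [norm_nonneg w, norm_nonneg v]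
  have h4 := mul_le_mul_of_nonneg_left h3 h1
  nlinarith

theorem cxLT : (∑' cs : List (Bool × PTree1), (t:ℂ)^edgesList cs)
    = ∑' T : PTree1, (t:ℂ)^T.edges := by
  rw [← eqvT.tsum_eq (f := fun T : PTree1 => (t:ℂ) ^ T.edges)]
  exact tsum_congr (fun cs => by rw [eqvT_apply, edges_node])

variable (z : ℂ) (hz : ‖z‖ = 1)
include hz

theorem sumC2 : Summable (fun T : PTree1 => (t:ℂ)^T.edges * T.labelSum z) :=
  summable_of_boundT ht0.le (by linarith) _ (fun T =>
    mul_bd_aux ht0 ht8 _ _ (norm_labelSum z hz T))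

theorem sumC2L : Summable (fun cs : List (Bool × PTree1) =>
    (t:ℂ)^edgesList cs * labelSumList cs z) :=
  summable_of_boundL ht0.le (by linarith) _ (fun cs =>
    mul_bd_aux ht0 ht8 _ _ (le_trans (norm_labelSumList z hz cs) (by linarith)))

theorem cx_eq1 :
    (∑' T : PTree1, (t:ℂ)^T.edges * T.labelSum z)
      = (∑' T : PTree1, (t:ℂ)^T.edges)
        + (∑' cs : List (Bool × PTree1), (t:ℂ)^edgesList cs * labelSumList cs z) := by
  rw [← eqvT.tsum_eq (f := fun T : PTree1 => (t:ℂ)^T.edges * T.labelSum z)]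
  have hpt : (fun cs : List (Bool × PTree1) => (t:ℂ)^(eqvT cs).edges * (eqvT cs).labelSum z)
      = fun cs => (t:ℂ)^edgesList cs + (t:ℂ)^edgesList cs * labelSumList cs z := by
    funext cs
    rw [eqvT_apply, edges_node, PTree1.labelSum]
    ring
  rw [hpt, Summable.tsum_add (sumC1L ht0 ht8) (sumC2L ht0 ht8 z hz), cxLT ht0 ht8]

/-- The two linear equations for the one-variable refined sum. -/
theorem cx_eq2 :
    (∑' cs : List (Bool × PTree1), (t:ℂ)^edgesList cs * labelSumList cs z)
      = t*(z+z⁻¹) * (∑' T : PTree1, (t:ℂ)^T.edges * T.labelSum z)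
          * (∑' cs : List (Bool × PTree1), (t:ℂ)^edgesList cs)
        + 2*t*(∑' T : PTree1, (t:ℂ)^T.edges)
          * (∑' cs : List (Bool × PTree1), (t:ℂ)^edgesList cs * labelSumList cs z) := by
  have hzi : ‖z⁻¹‖ = 1 := by rw [norm_inv, hz]; norm_num
  have hdec := tsum_list_cons (𝕜 := ℂ) _ (sumC2L ht0 ht8 z hz)
  have htri1 := tsum_triple (𝕜 := ℂ) (β := PTree1) (γ := Bool × PTree1)
    (fun b => (t:ℂ) * (if b then z else z⁻¹)) (fun T => (t:ℂ)^T.edges * T.labelSum z)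
    (fun cs => (t:ℂ)^edgesList cs) (sumC2 ht0 ht8 z hz) (sumC1L ht0 ht8)
  have htri2 := tsum_triple (𝕜 := ℂ) (β := PTree1) (γ := Bool × PTree1)
    (fun _ => (t:ℂ)) (fun T => (t:ℂ)^T.edges)
    (fun cs => (t:ℂ)^edgesList cs * labelSumList cs z) (sumC1 ht0 ht8)
    (sumC2L ht0 ht8 z hz)
  have hpt : (fun p : (Bool × PTree1) × List (Bool × PTree1) =>
        (t:ℂ)^edgesList (p.1 :: p.2) * labelSumList (p.1 :: p.2) z)
      = fun p => ((t:ℂ) * (if p.1.1 then z else z⁻¹)) * ((t:ℂ)^p.1.2.edges * p.1.2.labelSum z)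
            * (t:ℂ)^edgesList p.2
          + (t:ℂ) * (t:ℂ)^p.1.2.edges * ((t:ℂ)^edgesList p.2 * labelSumList p.2 z) := by
    funext ⟨⟨b, s⟩, r⟩
    rw [edgesList, PTree1.labelSumList, pow_add, pow_add, pow_one]
    ring
  rw [hpt] at hdec
  rw [Summable.tsum_add htri1.1 htri2.1, htri1.2, htri2.2] at hdec
  have h0 : (t:ℂ) ^ edgesList ([] : List (Bool × PTree1)) * labelSumList [] z = 0 := by
    rw [PTree1.labelSumList, mul_zero]
  rw [h0] at hdec
  norm_num at hdec
  linear_combination hdec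

end CxPart

section CxPart2

variable {t : ℝ} (ht0 : 0 < t) (ht8 : t < 1/8)
variable (x y : ℂ) (hx : ‖x‖ = 1) (hy : ‖y‖ = 1)

include ht0 ht8 hx hy

theorem sumC3 : Summable (fun T : PTree1 => (t:ℂ)^T.edges * T.labelSum x * T.labelSum y) :=
  summable_of_boundT ht0.le (by linarith) _ (fun T =>
    mul_bd_aux2 ht0 ht8 _ _ _ (norm_labelSum x hx T) (norm_labelSum y hy T))

theorem sumC3L : Summable (fun cs : List (Bool × PTree1) =>
    (t:ℂ)^edgesList cs * labelSumList cs x * labelSumList cs y) :=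
  summable_of_boundL ht0.le (by linarith) _ (fun cs =>
    mul_bd_aux2 ht0 ht8 _ _ _ (le_trans (norm_labelSumList x hx cs) (by linarith))
      (le_trans (norm_labelSumList y hy cs) (by linarith)))

theorem cx_eq3 :
    (∑' T : PTree1, (t:ℂ)^T.edges * T.labelSum x * T.labelSum y)
      = (∑' T : PTree1, (t:ℂ)^T.edges)
        + (∑' cs : List (Bool × PTree1), (t:ℂ)^edgesList cs * labelSumList cs x)
        + (∑' cs : List (Bool × PTree1), (t:ℂ)^edgesList cs * labelSumList cs y)
        + (∑' cs : List (Bool × PTree1),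
            (t:ℂ)^edgesList cs * labelSumList cs x * labelSumList cs y) := by
  rw [← eqvT.tsum_eq (f := fun T : PTree1 => (t:ℂ)^T.edges * T.labelSum x * T.labelSum y)]
  have hpt : (fun cs : List (Bool × PTree1) =>
        (t:ℂ)^(eqvT cs).edges * (eqvT cs).labelSum x * (eqvT cs).labelSum y)
      = fun cs => (t:ℂ)^edgesList cs
          + ((t:ℂ)^edgesList cs * labelSumList cs x
          + ((t:ℂ)^edgesList cs * labelSumList cs y
          + (t:ℂ)^edgesList cs * labelSumList cs x * labelSumList cs y)) := by
    funext cs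
    rw [eqvT_apply, edges_node]
    simp only [PTree1.labelSum]
    ring
  rw [hpt, Summable.tsum_add (sumC1L ht0 ht8) ((sumC2L ht0 ht8 x hx).add
      ((sumC2L ht0 ht8 y hy).add (sumC3L ht0 ht8 x y hx hy))),
    Summable.tsum_add (sumC2L ht0 ht8 x hx) ((sumC2L ht0 ht8 y hy).add (sumC3L ht0 ht8 x y hx hy)),
    Summable.tsum_add (sumC2L ht0 ht8 y hy) (sumC3L ht0 ht8 x y hx hy), cxLT ht0 ht8]
  ring

theorem cx_eq4 :
    (∑' cs : List (Bool × PTree1),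
        (t:ℂ)^edgesList cs * labelSumList cs x * labelSumList cs y)
      = (t*(x*y) + t*(x⁻¹*y⁻¹))
            * (∑' T : PTree1, (t:ℂ)^T.edges * T.labelSum x * T.labelSum y)
            * (∑' cs : List (Bool × PTree1), (t:ℂ)^edgesList cs)
        + (t*x + t*x⁻¹) * (∑' T : PTree1, (t:ℂ)^T.edges * T.labelSum x)
            * (∑' cs : List (Bool × PTree1), (t:ℂ)^edgesList cs * labelSumList cs y)
        + (t*y + t*y⁻¹) * (∑' T : PTree1, (t:ℂ)^T.edges * T.labelSum y)
            * (∑' cs : List (Bool × PTree1), (t:ℂ)^edgesList cs * labelSumList cs x)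
        + 2*t*(∑' T : PTree1, (t:ℂ)^T.edges)
            * (∑' cs : List (Bool × PTree1),
                (t:ℂ)^edgesList cs * labelSumList cs x * labelSumList cs y) := by
  have hdec := tsum_list_cons (𝕜 := ℂ) _ (sumC3L ht0 ht8 x y hx hy)
  have htri1 := tsum_triple (𝕜 := ℂ) (β := PTree1) (γ := Bool × PTree1)
    (fun b => (t:ℂ) * ((if b then x else x⁻¹) * (if b then y else y⁻¹)))
    (fun T => (t:ℂ)^T.edges * T.labelSum x * T.labelSum y)
    (fun cs => (t:ℂ)^edgesList cs) (sumC3 ht0 ht8 x y hx hy) (sumC1L ht0 ht8)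
  have htri2 := tsum_triple (𝕜 := ℂ) (β := PTree1) (γ := Bool × PTree1)
    (fun b => (t:ℂ) * (if b then x else x⁻¹))
    (fun T => (t:ℂ)^T.edges * T.labelSum x)
    (fun cs => (t:ℂ)^edgesList cs * labelSumList cs y) (sumC2 ht0 ht8 x hx)
    (sumC2L ht0 ht8 y hy)
  have htri3 := tsum_triple (𝕜 := ℂ) (β := PTree1) (γ := Bool × PTree1)
    (fun b => (t:ℂ) * (if b then y else y⁻¹))
    (fun T => (t:ℂ)^T.edges * T.labelSum y)
    (fun cs => (t:ℂ)^edgesList cs * labelSumList cs x) (sumC2 ht0 ht8 y hy)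
    (sumC2L ht0 ht8 x hx)
  have htri4 := tsum_triple (𝕜 := ℂ) (β := PTree1) (γ := Bool × PTree1)
    (fun _ => (t:ℂ)) (fun T => (t:ℂ)^T.edges)
    (fun cs => (t:ℂ)^edgesList cs * labelSumList cs x * labelSumList cs y)
    (sumC1 ht0 ht8) (sumC3L ht0 ht8 x y hx hy)
  have hpt : (fun p : (Bool × PTree1) × List (Bool × PTree1) =>
        (t:ℂ)^edgesList (p.1 :: p.2) * labelSumList (p.1 :: p.2) x
          * labelSumList (p.1 :: p.2) y)
      = fun p =>
          ((t:ℂ) * ((if p.1.1 then x else x⁻¹) * (if p.1.1 then y else y⁻¹)))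
              * ((t:ℂ)^p.1.2.edges * p.1.2.labelSum x * p.1.2.labelSum y)
              * (t:ℂ)^edgesList p.2
          + (((t:ℂ) * (if p.1.1 then x else x⁻¹)) * ((t:ℂ)^p.1.2.edges * p.1.2.labelSum x)
              * ((t:ℂ)^edgesList p.2 * labelSumList p.2 y)
          + (((t:ℂ) * (if p.1.1 then y else y⁻¹)) * ((t:ℂ)^p.1.2.edges * p.1.2.labelSum y)
              * ((t:ℂ)^edgesList p.2 * labelSumList p.2 x)
          + ((t:ℂ) * (t:ℂ)^p.1.2.edges
              * ((t:ℂ)^edgesList p.2 * labelSumList p.2 x * labelSumList p.2 y)))) := by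
    funext ⟨⟨b, s⟩, r⟩
    rw [edgesList, pow_add, pow_add, pow_one]
    simp only [PTree1.labelSumList]
    ring
  rw [hpt] at hdec
  rw [Summable.tsum_add htri1.1 (htri2.1.add (htri3.1.add htri4.1)),
    Summable.tsum_add htri2.1 (htri3.1.add htri4.1), Summable.tsum_add htri3.1 htri4.1,
    htri1.2, htri2.2, htri3.2, htri4.2] at hdec
  have h0 : (t:ℂ) ^ edgesList ([] : List (Bool × PTree1)) * labelSumList [] x
      * labelSumList [] y = 0 := by
    rw [PTree1.labelSumList, mul_zero, zero_mul]
  rw [h0] at hdec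
  norm_num at hdec
  linear_combination hdec

end CxPart2

theorem main_complex (t u : ℝ) (ht0 : 0 < t) (ht8 : t < 1/8) :
    (∑' T : PTree1, (t : ℂ)^T.edges
        * T.labelSum (Complex.exp (Complex.I * u))
        * T.labelSum (Complex.exp (-Complex.I * u)))
      = (1 + (Tfun1 t : ℂ)) * (1 + (Tfun1 t : ℂ)^2 * (Real.cos u : ℂ)^2) /
        ((1 - (Tfun1 t : ℂ)) * (1 - (Tfun1 t : ℂ) * (Real.cos u : ℂ))^2) := by
  set x := Complex.exp (Complex.I * u) with hxdef
  set y := Complex.exp (-Complex.I * u) with hydef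
  set c : ℂ := ((Real.cos u : ℝ) : ℂ) with hcdef
  set Tc : ℂ := ((Tfun1 t : ℝ) : ℂ) with hTcdef
  have e1 : Complex.I * (u:ℂ) = (u:ℂ) * Complex.I := mul_comm _ _
  have e2 : -Complex.I * (u:ℂ) = ((-u : ℝ):ℂ) * Complex.I := by push_cast; ring
  have hx : ‖x‖ = 1 := by
    rw [hxdef, e1]; exact Complex.norm_exp_ofReal_mul_I u
  have hy : ‖y‖ = 1 := by
    rw [hydef, e2]; exact Complex.norm_exp_ofReal_mul_I (-u)
  have hxy : x * y = 1 := by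
    rw [hxdef, hydef, ← Complex.exp_add,
      show Complex.I * (u:ℂ) + -Complex.I * (u:ℂ) = 0 by ring, Complex.exp_zero]
  have hxi : x⁻¹ = y := inv_eq_of_mul_eq_one_right hxy
  have hyi : y⁻¹ = x := inv_eq_of_mul_eq_one_left hxy
  have hyx : y * x = 1 := by rw [mul_comm]; exact hxy
  have hcos : x + y = 2 * c := by
    rw [hxdef, hydef, hcdef, Complex.ofReal_cos, Complex.cos, e1,
      show -Complex.I * (u:ℂ) = -((u:ℂ)) * Complex.I by ring]
    ring
  have hT0 : 0 < Tfun1 t := by linarith [gv_gt ht0 ht8]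
  have hT1 : Tfun1 t < 1 := by linarith [gv_lt ht0 ht8]
  have hqR : Tfun1 t = 2*t*(1 + Tfun1 t)^2 := by linarith [gv_quad ht0 ht8]
  have hq : Tc = 2*(t:ℂ)*(1+Tc)^2 := by rw [hTcdef]; exact_mod_cast hqR
  have h12 : (1+Tc)*(1-2*(t:ℂ)*(1+Tc)) = 1 := by linear_combination hq
  have hne1 : (1:ℂ) - Tc ≠ 0 := by
    rw [hTcdef, show (1:ℂ) - ((Tfun1 t:ℝ):ℂ) = (((1 - Tfun1 t : ℝ)):ℂ) by push_cast; ring]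
    exact Complex.ofReal_ne_zero.2 (by linarith)
  have hnem : (1:ℂ) - c*Tc ≠ 0 := by
    rw [hcdef, hTcdef, show (1:ℂ) - ((Real.cos u:ℝ):ℂ)*((Tfun1 t:ℝ):ℂ)
        = (((1 - Real.cos u * Tfun1 t : ℝ)):ℂ) by push_cast; ring]
    refine Complex.ofReal_ne_zero.2 ?_
    nlinarith [Real.cos_le_one u, Real.neg_one_le_cos u]
  have hG : (∑' T : PTree1, (t:ℂ)^T.edges) = 1 + Tc := by
    have h1 : (∑' T : PTree1, (t:ℂ)^T.edges) = ∑' T : PTree1, ((t^T.edges : ℝ) : ℂ) :=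
      tsum_congr (fun T => by push_cast; ring)
    rw [h1, ← Complex.ofReal_tsum, S1R_eq ht0 ht8, hTcdef]
    push_cast
    ring
  have E1x := cx_eq1 ht0 ht8 x hx
  have E1y := cx_eq1 ht0 ht8 y hy
  have E2x := cx_eq2 ht0 ht8 x hx
  have E2y := cx_eq2 ht0 ht8 y hy
  have E3 := cx_eq3 ht0 ht8 x y hx hy
  have E4 := cx_eq4 ht0 ht8 x y hx hy
  rw [hG] at E1x E1y
  rw [cxLT ht0 ht8, hG, hxi, hcos] at E2x
  rw [cxLT ht0 ht8, hG, hyi, show y + x = 2 * c by rw [← hcos]; ring] at E2y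
  rw [hG] at E3
  rw [cxLT ht0 ht8, hG, hxi, hyi, hxy, hyx] at E4
  set ax := ∑' T : PTree1, (t:ℂ)^T.edges * T.labelSum x with haxdef
  set ay := ∑' T : PTree1, (t:ℂ)^T.edges * T.labelSum y with haydef
  set alx := ∑' cs : List (Bool × PTree1), (t:ℂ)^edgesList cs * labelSumList cs x with halxdef
  set aly := ∑' cs : List (Bool × PTree1), (t:ℂ)^edgesList cs * labelSumList cs y with halydef
  set P := ∑' T : PTree1, (t:ℂ)^T.edges * T.labelSum x * T.labelSum y with hPdef
  set PL := ∑' cs : List (Bool × PTree1),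
    (t:ℂ)^edgesList cs * labelSumList cs x * labelSumList cs y with hPLdef
  -- one-variable solutions
  have hKx : (ax - (1+Tc))*(1-2*(t:ℂ)*(1+Tc)) = 2*(t:ℂ)*c*ax*(1+Tc) := by
    linear_combination (1-2*(t:ℂ)*(1+Tc))*E1x + E2x
  have hKy : (ay - (1+Tc))*(1-2*(t:ℂ)*(1+Tc)) = 2*(t:ℂ)*c*ay*(1+Tc) := by
    linear_combination (1-2*(t:ℂ)*(1+Tc))*E1y + E2y
  have hax : ax*(1-c*Tc) = 1+Tc := by
    linear_combination (1+Tc)*hKx - (ax-(1+Tc))*h12 - ax*c*hq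
  have hay : ay*(1-c*Tc) = 1+Tc := by
    linear_combination (1+Tc)*hKy - (ay-(1+Tc))*h12 - ay*c*hq
  -- two-variable solution
  have halx : alx = ax - (1+Tc) := by linear_combination -E1x
  have haly : aly = ay - (1+Tc) := by linear_combination -E1y
  rw [halx, haly] at E3 E4
  have hE4' : PL = 2*(t:ℂ)*P*(1+Tc) + 2*(t:ℂ)*c*ax*(ay-(1+Tc)) + 2*(t:ℂ)*c*ay*(ax-(1+Tc))
      + 2*(t:ℂ)*(1+Tc)*PL := by
    linear_combination E4 + (t:ℂ)*(ax*(ay-(1+Tc)) + ay*(ax-(1+Tc)))*hcos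
  have hPL2 : PL = 2*(t:ℂ)*P*(1+Tc)^2 + 2*(t:ℂ)*c*(1+Tc)*ax*(ay-(1+Tc))
      + 2*(t:ℂ)*c*(1+Tc)*ay*(ax-(1+Tc)) := by
    linear_combination (1+Tc)*hE4' - PL*h12
  have hP3 : P*(1-Tc) = ax + ay - (1+Tc) + 2*(t:ℂ)*c*(1+Tc)*ax*(ay-(1+Tc))
      + 2*(t:ℂ)*c*(1+Tc)*ay*(ax-(1+Tc)) := by
    linear_combination E3 + hPL2 - P*hq
  have hden : ((1:ℂ)-Tc)*(1-Tc*c)^2 ≠ 0 :=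
    mul_ne_zero hne1 (pow_ne_zero 2 (by rw [mul_comm Tc c]; exact hnem))
  rw [eq_div_iff hden]
  linear_combination ((1-c*Tc)^2)*hP3
    + ((1-c*Tc) + 2*(t:ℂ)*c*(1+Tc)*(2*(1+Tc)-(1+Tc)*(1-c*Tc))
        + 4*(t:ℂ)*c*(1+Tc)*(ay*(1-c*Tc)-(1+Tc)))*hax
    + ((1-c*Tc) + 2*(t:ℂ)*c*(1+Tc)*(2*(1+Tc)-(1+Tc)*(1-c*Tc)))*hay
    - 2*c^2*Tc*(1+Tc)*hq

end PT1Aux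



/-- For plane trees with edge increments `±1`:
`F₂(t, e^{iu}, e^{-iu}) = (1+T)(1+T² cos²u)/((1-T)(1-T cos u)²)` with `T = 2t(1+T)²`. -/
theorem F2_plane_pm1_specialization (t u : ℝ) (ht0 : 0 < t) (ht : t < 1/8) :
    (Tfun1 t : ℂ) = 2*t*(1 + (Tfun1 t : ℂ))^2 ∧
    (∑' T : PTree1, (t : ℂ)^T.edges
        * T.labelSum (Complex.exp (Complex.I * u))
        * T.labelSum (Complex.exp (-Complex.I * u)))
      = (1 + (Tfun1 t : ℂ)) * (1 + (Tfun1 t : ℂ)^2 * (Real.cos u : ℂ)^2) /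
        ((1 - (Tfun1 t : ℂ)) * (1 - (Tfun1 t : ℂ) * (Real.cos u : ℂ))^2) := by
  constructor
  · have hqR : Tfun1 t = 2*t*(1 + Tfun1 t)^2 := by linarith [PT1Aux.gv_quad ht0 ht]
    exact_mod_cast hqR
  · exact PT1Aux.main_complex t u ht0 ht
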